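/- arXiv:1304.0530 — 3 statements merged into one kernel-verified Lean document; each statement's English description precedes it below -/
import Mathlib

section
/- In the polynomial ring k[ξ_1, η_1, ..., ξ_n, η_n], the subring D_n of all polynomials f such that ∂f/∂ξ_i lies in the ideal (η_i) for every i has a k-vector-space basis given by the monomials ξ_1^{a_1}···ξ_n^{a_n} η_1^{b_1}···η_n^{b_n} such that a_i > 0 implies b_i > 0 for all i. -/
open MvPolynomial

lemma coeff_pderiv' {σ R : Type*} [CommSemiring R] (j : σ) (f : MvPolynomial σ R)
    (m : σ →₀ ℕ) :
    coeff m (pderiv j f) = (m j + 1) * coeff (m + Finsupp.single j 1) f := by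
  classical
  induction f using MvPolynomial.induction_on' with
  | monomial d c =>
    rw [pderiv_monomial, coeff_monomial, coeff_monomial]
    split_ifs with h1 h2 h2
    · subst h2; simp [mul_comm]
    · rcases Nat.eq_zero_or_pos (d j) with h0 | h0
      · simp [h0]
      · exfalso; apply h2
        rw [← h1]
        ext x
        rcases eq_or_ne j x with rfl | hx
        · simp [Finsupp.single_apply]; omega
        · simp [Finsupp.single_apply, hx]
    · exfalso; apply h1
      subst h2
      ext x
      rcases eq_or_ne j x with rfl | hx
      · simp [Finsupp.single_apply]
      · simp [Finsupp.single_apply, hx]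
    · ring
  | add p q hp hq =>
    simp [map_add, coeff_add, hp, hq, mul_add]

lemma span_singleton_X_eq {k : Type*} [Field k] (n : ℕ) (i : Fin n) :
    Ideal.span {(X (i, true) : MvPolynomial (Fin n × Bool) k)} =
      Ideal.span (X '' {(i, true)} : Set (MvPolynomial (Fin n × Bool) k)) := by
  rw [Set.image_singleton]

/-- The subring (here, submodule) `D_n` of polynomials `f` in
`k[ξ_1,η_1,...,ξ_n,η_n]` (with `ξ_i = X (i,false)`, `η_i = X (i,true)`)
such that `∂f/∂ξ_i ∈ (η_i)` for all `i`. -/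
noncomputable def Dsub (k : Type*) [Field k] (n : ℕ) :
    Submodule k (MvPolynomial (Fin n × Bool) k) where
  carrier := {f | ∀ i : Fin n,
    pderiv (i, false) f ∈ Ideal.span {(X (i, true) : MvPolynomial (Fin n × Bool) k)}}
  add_mem' := by
    intro a b ha hb i
    rw [map_add]
    exact Ideal.add_mem _ (ha i) (hb i)
  zero_mem' := by
    intro i
    rw [map_zero]
    exact Ideal.zero_mem _
  smul_mem' := by
    intro c f hf i
    rw [Derivation.map_smul]
    exact Submodule.smul_of_tower_mem _ c (hf i)

/-- a `k`-basis of `D_n` is given by the monomials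
`ξ^a η^b` such that `a_i > 0` implies `b_i > 0` for all `i`. -/
theorem stmt1 {k : Type*} [Field k] [CharZero k] (n : ℕ) :
    LinearIndependent k
      (fun d : {d : (Fin n × Bool) →₀ ℕ //
          ∀ i : Fin n, 0 < d (i, false) → 0 < d (i, true)} =>
        (monomial d.1 (1 : k) : MvPolynomial (Fin n × Bool) k)) ∧
    Submodule.span k
      (Set.range (fun d : {d : (Fin n × Bool) →₀ ℕ //
          ∀ i : Fin n, 0 < d (i, false) → 0 < d (i, true)} =>
        (monomial d.1 (1 : k) : MvPolynomial (Fin n × Bool) k))) = Dsub k n := by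
  classical
  constructor
  · have h := (basisMonomials (Fin n × Bool) k).linearIndependent
    rw [coe_basisMonomials] at h
    exact h.comp Subtype.val Subtype.val_injective
  · apply le_antisymm
    · rw [Submodule.span_le]
      rintro _ ⟨⟨d, hd⟩, rfl⟩
      intro i
      rw [pderiv_monomial]
      rcases Nat.eq_zero_or_pos (d (i, false)) with h0 | h0
      · simp only [h0, Nat.cast_zero, mul_zero, monomial_zero]
        exact Ideal.zero_mem _
      · rw [span_singleton_X_eq, mem_ideal_span_X_image]
        intro m hm
        have hsub : m = d - Finsupp.single (i, false) 1 := by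
          have := support_monomial_subset hm
          simpa using this
        refine ⟨(i, true), Set.mem_singleton _, ?_⟩
        subst hsub
        have h1 : Finsupp.single ((i, false) : Fin n × Bool) 1 (i, true) = 0 :=
          Finsupp.single_eq_of_ne (by simp)
        rw [Finsupp.tsub_apply, h1]
        have := hd i h0
        omega
    · intro f hf
      -- every monomial in the support of f satisfies the condition
      have key : ∀ d ∈ f.support, ∀ i : Fin n, 0 < d (i, false) → 0 < d (i, true) := by
        intro d hd i hpos
        by_contra hneg
        have hdt : d (i, true) = 0 := by omega
        set m : (Fin n × Bool) →₀ ℕ := d - Finsupp.single (i, false) 1 with hm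
        have hmd : m + Finsupp.single (i, false) 1 = d := by
          ext x
          rcases eq_or_ne x (i, false) with rfl | hx
          · simp [hm, Finsupp.single_apply]; omega
          · simp [hm, Finsupp.single_apply, Ne.symm hx]
        have hcoeff : coeff m (pderiv (i, false) f) ≠ 0 := by
          rw [coeff_pderiv', hmd]
          apply mul_ne_zero
          · exact Nat.cast_add_one_ne_zero (m (i, false))
          · exact mem_support_iff.mp hd
        have hmem := hf i
        rw [span_singleton_X_eq, mem_ideal_span_X_image] at hmem
        obtain ⟨j, hj, hjne⟩ := hmem m (mem_support_iff.mpr hcoeff)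
        rw [Set.mem_singleton_iff] at hj
        subst hj
        apply hjne
        have h1 : Finsupp.single ((i, false) : Fin n × Bool) 1 (i, true) = 0 :=
          Finsupp.single_eq_of_ne (by simp)
        have : m (i, true) = d (i, true) := by
          rw [hm, Finsupp.tsub_apply, h1, Nat.sub_zero]
        omega
      -- write f as a sum of its monomials
      rw [f.as_sum]
      apply Submodule.sum_mem
      intro d hd
      have : (monomial d (coeff d f) : MvPolynomial (Fin n × Bool) k)
          = coeff d f • monomial d 1 := by
        rw [smul_monomial, smul_eq_mul, mul_one]
      rw [this]
      apply Submodule.smul_mem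
      apply Submodule.subset_span
      exact ⟨⟨d, key d hd⟩, rfl⟩
end

section
/- With the grading deg p_{a,b} = a + b, the subalgebra of Λ_2 generated by the elements p_{a+1,b} − p_{a,b+1} (a, b ≥ 0) is a free polynomial algebra with exactly k free generators in each degree k ≥ 1, and hence its Hilbert series is Π_{k≥1}(1 − t^k)^{−k}. -/
open MvPolynomial

/-- The generator `p_{a+1,b} - p_{a,b+1}` of the subalgebra, inside
`Λ_2 = k[p_{a,b} : (a,b) ≠ (0,0)]`. -/
noncomputable def lambdaGen (k : Type*) [Field k] (ab : ℕ × ℕ) :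
    MvPolynomial {p : ℕ × ℕ // p ≠ (0, 0)} k :=
  X ⟨(ab.1 + 1, ab.2), by simp [Prod.ext_iff]⟩ - X ⟨(ab.1, ab.2 + 1), by simp [Prod.ext_iff]⟩

/-- The grading weight `deg p_{a,b} = a + b` on the variables of `Λ_2`. -/
def lambdaWeight : {p : ℕ × ℕ // p ≠ (0, 0)} → ℕ := fun v => v.1.1 + v.1.2

namespace Stmt16Aux

variable {k : Type*} [Field k]

/-- The retraction sending `p_{a,b}` (with `a+b ≥ 1`) to `∑_{i<a} Y_{(i, a+b-1-i)}`. -/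
noncomputable def retr (k : Type*) [Field k] :
    {p : ℕ × ℕ // p ≠ (0, 0)} → MvPolynomial (ℕ × ℕ) k :=
  fun v => ∑ i ∈ Finset.range v.1.1, X (i, v.1.1 + v.1.2 - 1 - i)

lemma retr_comp : (aeval (retr k)) ∘ lambdaGen k = (X : ℕ × ℕ → MvPolynomial (ℕ × ℕ) k) := by
  funext ab
  obtain ⟨a, b⟩ := ab
  simp only [Function.comp_apply, lambdaGen, map_sub, aeval_X, retr]
  have h1 : ∀ i : ℕ, a + 1 + b - 1 - i = a + b - i := fun i => by omega
  have h2 : ∀ i : ℕ, a + (b + 1) - 1 - i = a + b - i := fun i => by omega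
  simp only [h1, h2, Finset.sum_range_succ]
  have : a + b - a = b := by omega
  rw [this]
  ring

lemma algInd : AlgebraicIndependent k (lambdaGen k) := by
  apply AlgebraicIndependent.of_comp (aeval (retr k))
  rw [retr_comp]
  exact MvPolynomial.algebraicIndependent_X (ℕ × ℕ) k

lemma gen_hom (ab : ℕ × ℕ) :
    (lambdaGen k ab).IsWeightedHomogeneous lambdaWeight (ab.1 + ab.2 + 1) := by
  have h1 := isWeightedHomogeneous_X k lambdaWeight
    (⟨(ab.1 + 1, ab.2), by simp [Prod.ext_iff]⟩ : {p : ℕ × ℕ // p ≠ (0, 0)})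
  have h2 := isWeightedHomogeneous_X k lambdaWeight
    (⟨(ab.1, ab.2 + 1), by simp [Prod.ext_iff]⟩ : {p : ℕ × ℕ // p ≠ (0, 0)})
  have e1 : lambdaWeight (⟨(ab.1 + 1, ab.2), by simp [Prod.ext_iff]⟩ :
      {p : ℕ × ℕ // p ≠ (0, 0)}) = ab.1 + ab.2 + 1 := by simp [lambdaWeight]; omega
  have e2 : lambdaWeight (⟨(ab.1, ab.2 + 1), by simp [Prod.ext_iff]⟩ :
      {p : ℕ × ℕ // p ≠ (0, 0)}) = ab.1 + ab.2 + 1 := by simp [lambdaWeight]; omega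
  rw [e1] at h1
  rw [e2] at h2
  rw [← mem_weightedHomogeneousSubmodule] at h1 h2 ⊢
  exact sub_mem h1 h2

lemma count_gens (K : ℕ) (hK : 1 ≤ K) :
    Set.ncard {ab : ℕ × ℕ | ab.1 + ab.2 + 1 = K} = K := by
  have hset : {ab : ℕ × ℕ | ab.1 + ab.2 + 1 = K} =
      ↑((Finset.range K).image fun a => (a, K - 1 - a)) := by
    ext ⟨a, b⟩
    simp only [Set.mem_setOf_eq, Finset.coe_image, Set.mem_image, Finset.mem_coe,
      Finset.mem_range, Prod.mk.injEq]
    constructor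
    · rintro h; exact ⟨a, by omega, rfl, by omega⟩
    · rintro ⟨x, hx, rfl, rfl⟩; omega
  rw [hset, Set.ncard_coe_finset,
    Finset.card_image_of_injOn (fun x _ y _ h => by simpa using congrArg Prod.fst h),
    Finset.card_range]


/-! ### Combinatorial bookkeeping -/

/-- weighted degree of a monomial exponent vector -/
def wt (σ : (ℕ × ℕ) →₀ ℕ) : ℕ := σ.sum fun ab e => e * (ab.1 + ab.2 + 1)

/-- index type for the generators counted with multiplicity: pairs `⟨d, i⟩`, `i < d` -/
abbrev SIdx := Σ _ : ℕ, ℕ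

def S (n : ℕ) : Finset SIdx := (Finset.Icc 1 n).sigma fun d => Finset.range d

def Fn (n : ℕ) : Finset (SIdx →₀ ℕ) :=
  (Finset.finsuppAntidiag (S n) n).filter fun l => ∀ x ∈ S n, x.1 ∣ l x

def emb : (ℕ × ℕ) ↪ SIdx :=
  ⟨fun ab => ⟨ab.1 + ab.2 + 1, ab.1⟩, by
    rintro ⟨a, b⟩ ⟨c, d⟩ h
    obtain ⟨h1, h2⟩ := Sigma.mk.inj_iff.1 h
    rw [heq_eq_eq] at h2
    simp only [Prod.mk.injEq]
    omega⟩

noncomputable def scale (σ : (ℕ × ℕ) →₀ ℕ) : (ℕ × ℕ) →₀ ℕ :=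
  Finsupp.onFinset σ.support (fun ab => σ ab * (ab.1 + ab.2 + 1)) fun ab h =>
    Finsupp.mem_support_iff.2 fun h0 => h (by simp [h0])

noncomputable def toL (σ : (ℕ × ℕ) →₀ ℕ) : SIdx →₀ ℕ := (scale σ).embDomain emb

noncomputable def invMap (l : SIdx →₀ ℕ) : (ℕ × ℕ) →₀ ℕ :=
  Finsupp.onFinset (l.support.image fun x => (x.2, x.1 - 1 - x.2))
    (fun ab => l ⟨ab.1 + ab.2 + 1, ab.1⟩ / (ab.1 + ab.2 + 1)) fun ab h => by
      refine Finset.mem_image.2 ⟨⟨ab.1 + ab.2 + 1, ab.1⟩, Finsupp.mem_support_iff.2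
        fun h0 => h (by simp [h0]), ?_⟩
      simp only
      congr 1 <;> omega

lemma invMap_apply (l : SIdx →₀ ℕ) (a b : ℕ) :
    invMap l (a, b) = l ⟨a + b + 1, a⟩ / (a + b + 1) := rfl

lemma toL_apply (σ : (ℕ × ℕ) →₀ ℕ) (a b : ℕ) :
    toL σ ⟨a + b + 1, a⟩ = σ (a, b) * (a + b + 1) := by
  have : (⟨a + b + 1, a⟩ : SIdx) = emb (a, b) := rfl
  rw [this, toL, Finsupp.embDomain_apply_self]
  rfl

lemma invMap_toL (σ : (ℕ × ℕ) →₀ ℕ) : invMap (toL σ) = σ := by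
  ext ⟨a, b⟩
  rw [invMap_apply, toL_apply, Nat.mul_div_cancel _ (Nat.succ_pos _)]

lemma sum_toL (σ : (ℕ × ℕ) →₀ ℕ) : (toL σ).sum (fun _ e => e) = wt σ := by
  rw [toL, Finsupp.sum_embDomain]
  rw [Finsupp.sum_of_support_subset (scale σ) Finsupp.support_onFinset_subset
    (fun _ e => e) (fun _ _ => rfl)]
  rw [wt, Finsupp.sum]
  rfl

lemma toL_mem {σ : (ℕ × ℕ) →₀ ℕ} {n : ℕ} (hσ : wt σ = n) : toL σ ∈ Fn n := by
  have hsupp : (toL σ).support ⊆ S n := by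
    intro x hx
    rw [toL, Finsupp.support_embDomain, Finset.mem_map] at hx
    obtain ⟨ab, hab, rfl⟩ := hx
    have hab' : σ ab ≠ 0 := by
      intro h0
      apply Finsupp.mem_support_iff.1 hab
      show σ ab * _ = 0
      simp [h0]
    have habs : ab ∈ σ.support := Finsupp.mem_support_iff.2 hab'
    have hle : σ ab * (ab.1 + ab.2 + 1) ≤ n := by
      rw [← hσ, wt, Finsupp.sum]
      exact Finset.single_le_sum (f := fun ab => σ ab * (ab.1 + ab.2 + 1))
        (fun _ _ => Nat.zero_le _) habs
    have h1 : ab.1 + ab.2 + 1 ≤ n := le_trans (Nat.le_mul_of_pos_left _ (Nat.pos_of_ne_zero hab')) hle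
    change (⟨ab.1 + ab.2 + 1, ab.1⟩ : SIdx) ∈ S n
    simp only [S, Finset.mem_sigma, Finset.mem_Icc, Finset.mem_range, emb,
      Function.Embedding.coeFn_mk]
    omega
  refine Finset.mem_filter.2 ⟨Finset.mem_finsuppAntidiag'.2 ⟨by rw [sum_toL, hσ], hsupp⟩, ?_⟩
  intro x hx
  by_cases hxs : x ∈ (toL σ).support
  · rw [toL, Finsupp.support_embDomain, Finset.mem_map] at hxs
    obtain ⟨ab, _, rfl⟩ := hxs
    have : toL σ (emb ab) = σ ab * (ab.1 + ab.2 + 1) := by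
      rw [toL, Finsupp.embDomain_apply_self]; rfl
    rw [this]
    exact dvd_mul_left _ _
  · rw [Finsupp.notMem_support_iff.1 hxs]
    exact dvd_zero _

lemma toL_invMap {l : SIdx →₀ ℕ} {n : ℕ} (hl : l ∈ Fn n) : toL (invMap l) = l := by
  obtain ⟨hanti, hdvd⟩ := Finset.mem_filter.1 hl
  obtain ⟨_, hsupp⟩ := Finset.mem_finsuppAntidiag'.1 hanti
  ext ⟨d, i⟩
  by_cases hid : i < d
  · obtain ⟨hd1, rfl⟩ : ∃ b, d = i + b + 1 := ⟨d - 1 - i, by omega⟩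
    have hx : (⟨i + hd1 + 1, i⟩ : SIdx) = emb (i, hd1) := rfl
    have key : toL (invMap l) ⟨i + hd1 + 1, i⟩ = (l ⟨i + hd1 + 1, i⟩ / (i + hd1 + 1)) * (i + hd1 + 1) := by
      rw [hx, toL, Finsupp.embDomain_apply_self]
      show invMap l (i, hd1) * (i + hd1 + 1) = _
      rw [invMap_apply, ← hx]
    rw [key]
    by_cases h0 : l ⟨i + hd1 + 1, i⟩ = 0
    · simp [h0]
    · exact Nat.div_mul_cancel (hdvd _ (hsupp (Finsupp.mem_support_iff.2 h0)))
  · have h1 : toL (invMap l) ⟨d, i⟩ = 0 := by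
      apply Finsupp.embDomain_notin_range
      rintro ⟨ab, hab⟩
      obtain ⟨h1, h2⟩ := Sigma.mk.inj_iff.1 hab.symm
      rw [heq_eq_eq] at h2
      omega
    rw [h1]
    by_contra h0
    have : (⟨d, i⟩ : SIdx) ∈ S n := hsupp (Finsupp.mem_support_iff.2 fun hc => h0 (by rw [hc]))
    simp only [S, Finset.mem_sigma, Finset.mem_range] at this
    omega

lemma set_eq (n : ℕ) : {σ : (ℕ × ℕ) →₀ ℕ | wt σ = n} = ↑((Fn n).image invMap) := by
  ext σ
  simp only [Set.mem_setOf_eq, Finset.coe_image, Set.mem_image, Finset.mem_coe]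
  constructor
  · intro hσ
    exact ⟨toL σ, toL_mem hσ, invMap_toL σ⟩
  · rintro ⟨l, hl, rfl⟩
    obtain ⟨hsum, _⟩ := Finset.mem_finsuppAntidiag'.1 (Finset.mem_filter.1 hl).1
    rw [← sum_toL, toL_invMap hl, hsum]

lemma card_eq (n : ℕ) : ((Fn n).image invMap).card = (Fn n).card :=
  Finset.card_image_of_injOn fun l1 h1 l2 h2 h => by
    rw [← toL_invMap h1, h, toL_invMap h2]


/-! ### Power series computations -/

lemma coeff_inv_one_sub_pow {d : ℕ} (hd : 1 ≤ d) (m : ℕ) :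
    PowerSeries.coeff (R := ℚ) m ((1 - PowerSeries.X ^ d)⁻¹) = if d ∣ m then 1 else 0 := by
  classical
  have hc : PowerSeries.constantCoeff (R := ℚ) (1 - PowerSeries.X ^ d) ≠ 0 := by
    rw [map_sub, map_one, map_pow, PowerSeries.constantCoeff_X,
      zero_pow (by omega : d ≠ 0), sub_zero]
    exact one_ne_zero
  have h : ((1 - PowerSeries.X ^ d)⁻¹ : PowerSeries ℚ) =
      PowerSeries.mk fun m => if d ∣ m then (1 : ℚ) else 0 := by
    rw [PowerSeries.inv_eq_iff_mul_eq_one hc]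
    ext m
    rw [mul_sub, mul_one, map_sub, PowerSeries.coeff_mul_X_pow', PowerSeries.coeff_mk,
      PowerSeries.coeff_one]
    rcases Nat.lt_or_ge m d with h | h
    · have hdm : d ∣ m ↔ m = 0 := by
        constructor
        · intro hdvd
          rcases Nat.eq_zero_or_pos m with h0 | h0
          · exact h0
          · exact absurd (Nat.le_of_dvd h0 hdvd) (by omega)
        · rintro rfl; exact dvd_zero d
      rw [if_neg (by omega : ¬ d ≤ m)]
      simp [hdm]
    · have hm0 : m ≠ 0 := by omega
      have hdvd : d ∣ m ↔ d ∣ m - d := by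
        constructor
        · intro h'; exact Nat.dvd_sub h' dvd_rfl
        · intro h'
          have h2 := Nat.sub_add_cancel h
          rw [← h2]
          exact Nat.dvd_add h' dvd_rfl
      rw [if_pos h, if_neg hm0, PowerSeries.coeff_mk]
      simp only [hdvd, sub_self]
  rw [h, PowerSeries.coeff_mk]

lemma coeff_prod_eq (n : ℕ) :
    PowerSeries.coeff (R := ℚ) n
        (∏ d ∈ Finset.Icc 1 n, ((1 - PowerSeries.X ^ d)⁻¹ : PowerSeries ℚ) ^ d) =
      ((Fn n).card : ℚ) := by
  classical
  have hprod : (∏ d ∈ Finset.Icc 1 n, ((1 - PowerSeries.X ^ d)⁻¹ : PowerSeries ℚ) ^ d)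
      = ∏ x ∈ S n, (1 - PowerSeries.X ^ x.1)⁻¹ := by
    rw [S, Finset.prod_sigma]
    exact Finset.prod_congr rfl fun d _ => by simp
  rw [hprod, PowerSeries.coeff_prod]
  have hterm : ∀ l ∈ Finset.finsuppAntidiag (S n) n,
      (∏ x ∈ S n, PowerSeries.coeff (R := ℚ) (l x) (1 - PowerSeries.X ^ x.1)⁻¹)
      = if ∀ x ∈ S n, x.1 ∣ l x then 1 else 0 := by
    intro l _
    have key : ∀ x ∈ S n, PowerSeries.coeff (R := ℚ) (l x) (1 - PowerSeries.X ^ x.1)⁻¹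
        = if x.1 ∣ l x then 1 else 0 := by
      intro x hx
      have hx' : 1 ≤ x.1 := by
        simp only [S, Finset.mem_sigma, Finset.mem_Icc] at hx
        exact hx.1.1
      exact coeff_inv_one_sub_pow hx' (l x)
    rw [Finset.prod_congr rfl key, Finset.prod_boole]
  rw [Finset.sum_congr rfl hterm, Finset.sum_boole]
  rfl


/-! ### The subalgebra and its homogeneous components -/

variable (k) in
noncomputable def mon (σ : (ℕ × ℕ) →₀ ℕ) : MvPolynomial {p : ℕ × ℕ // p ≠ (0, 0)} k :=
  σ.prod fun ab e => lambdaGen k ab ^ e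

lemma pow_hom {p : MvPolynomial {p : ℕ × ℕ // p ≠ (0, 0)} k} {m : ℕ}
    (h : p.IsWeightedHomogeneous lambdaWeight m) (e : ℕ) :
    (p ^ e).IsWeightedHomogeneous lambdaWeight (e * m) := by
  induction e with
  | zero => simpa using isWeightedHomogeneous_one k lambdaWeight
  | succ e ih =>
      rw [pow_succ]
      have h2 := ih.mul h
      rwa [show e * m + m = (e + 1) * m by ring] at h2

lemma mon_hom (σ : (ℕ × ℕ) →₀ ℕ) :
    (mon k σ).IsWeightedHomogeneous lambdaWeight (wt σ) := by
  rw [mon, Finsupp.prod, wt, Finsupp.sum]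
  exact IsWeightedHomogeneous.prod _ _ _ fun ab _ => pow_hom (gen_hom ab) (σ ab)

lemma mon_mem_adjoin (σ : (ℕ × ℕ) →₀ ℕ) :
    mon k σ ∈ Algebra.adjoin k (Set.range (lambdaGen k)) := by
  rw [mon, Finsupp.prod]
  exact Subalgebra.prod_mem _ fun ab _ => pow_mem (Algebra.subset_adjoin (Set.mem_range_self ab)) _

lemma aeval_monomial_eq (σ : (ℕ × ℕ) →₀ ℕ) :
    aeval (lambdaGen k) (monomial σ (1 : k)) = mon k σ := by
  rw [aeval_monomial, map_one, one_mul]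
  rfl

lemma mon_li : LinearIndependent k (mon k) := by
  have hinj : Function.Injective (aeval (lambdaGen k) : MvPolynomial (ℕ × ℕ) k →ₐ[k] _) :=
    algebraicIndependent_iff_injective_aeval.1 algInd
  have h := ((basisMonomials (ℕ × ℕ) k).linearIndependent).map'
    (aeval (lambdaGen k)).toLinearMap (LinearMap.ker_eq_bot.2 hinj)
  have heq : (⇑(aeval (lambdaGen k)).toLinearMap ∘ ⇑(basisMonomials (ℕ × ℕ) k)) = mon k := by
    funext σ
    simp only [Function.comp_apply, coe_basisMonomials, AlgHom.toLinearMap_apply]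
    exact aeval_monomial_eq σ
  rwa [heq] at h

lemma span_eq (n : ℕ) :
    Subalgebra.toSubmodule (Algebra.adjoin k (Set.range (lambdaGen k))) ⊓
        weightedHomogeneousSubmodule k lambdaWeight n =
      Submodule.span k (mon k '' {σ | wt σ = n}) := by
  classical
  apply le_antisymm
  · intro x hx
    obtain ⟨hxA, hxW⟩ := Submodule.mem_inf.1 hx
    rw [Subalgebra.mem_toSubmodule, Algebra.adjoin_range_eq_range_aeval] at hxA
    obtain ⟨P, hP0⟩ := hxA
    have hP : aeval (lambdaGen k) P = x := hP0
    have hx2 : x = ∑ σ ∈ P.support, P.coeff σ • mon k σ := by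
      rw [← hP]
      conv_lhs => rw [P.as_sum]
      rw [map_sum]
      refine Finset.sum_congr rfl fun σ _ => ?_
      have hm : (monomial σ (P.coeff σ) : MvPolynomial (ℕ × ℕ) k)
          = P.coeff σ • monomial σ 1 := by
        rw [smul_monomial, smul_eq_mul, mul_one]
      rw [hm, map_smul, aeval_monomial_eq]
    have hxW' : x.IsWeightedHomogeneous lambdaWeight n :=
      (mem_weightedHomogeneousSubmodule _ _ _ _).1 hxW
    have hmem : weightedHomogeneousComponent lambdaWeight n x ∈
        Submodule.span k (mon k '' {σ | wt σ = n}) := by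
      rw [hx2, map_sum]
      refine Submodule.sum_mem _ fun σ _ => ?_
      rw [map_smul, weightedHomogeneousComponent_of_mem (mon_hom σ)]
      split_ifs with h
      · exact Submodule.smul_mem _ _ (Submodule.subset_span ⟨σ, h.symm, rfl⟩)
      · rw [smul_zero]
        exact Submodule.zero_mem _
    rwa [hxW'.weightedHomogeneousComponent_same] at hmem
  · rw [Submodule.span_le]
    rintro _ ⟨σ, hσ, rfl⟩
    exact Submodule.mem_inf.2 ⟨mon_mem_adjoin σ,
      (mem_weightedHomogeneousSubmodule _ _ _ _).2 (hσ ▸ mon_hom σ)⟩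

lemma finrank_eq (n : ℕ) :
    Module.finrank k ↥(Subalgebra.toSubmodule (Algebra.adjoin k (Set.range (lambdaGen k))) ⊓
        weightedHomogeneousSubmodule k lambdaWeight n) = (Fn n).card := by
  classical
  have hs : LinearIndependent k
      (fun x : ((((Fn n).image invMap) : Finset ((ℕ × ℕ) →₀ ℕ)) : Set ((ℕ × ℕ) →₀ ℕ)) =>
        mon k x.1) :=
    mon_li.comp _ Subtype.val_injective
  have h2 := LinearIndepOn.id_image (v := mon k)
    (s := ((((Fn n).image invMap) : Finset ((ℕ × ℕ) →₀ ℕ)) : Set ((ℕ × ℕ) →₀ ℕ))) hs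
  rw [span_eq, set_eq n]
  rw [← Finset.coe_image] at h2 ⊢
  rw [finrank_span_finset_eq_card h2,
    Finset.card_image_of_injective _ mon_li.injective, card_eq]

end Stmt16Aux

/-- with the grading `deg p_{a,b} = a + b`, the subalgebra of
`Λ_2` generated by the elements `p_{a+1,b} - p_{a,b+1}` is a free polynomial
algebra (the generators are algebraically independent), each generator
`p_{a+1,b} - p_{a,b+1}` is homogeneous of degree `a + b + 1`, there are exactly
`K` generators in each degree `K ≥ 1`, and the Hilbert series of the subalgebra
is `Π_{d ≥ 1} (1 - t^d)^{-d}` (coefficientwise: the degree-`n` component has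
dimension the `n`-th coefficient of the finite product over `1 ≤ d ≤ n`, which
agrees with the infinite product). -/
theorem stmt16 {k : Type*} [Field k] [CharZero k] :
    AlgebraicIndependent k (lambdaGen k) ∧
    (∀ ab : ℕ × ℕ,
      (lambdaGen k ab).IsWeightedHomogeneous lambdaWeight (ab.1 + ab.2 + 1)) ∧
    (∀ K : ℕ, 1 ≤ K → Set.ncard {ab : ℕ × ℕ | ab.1 + ab.2 + 1 = K} = K) ∧
    ∀ n : ℕ,
      (Module.finrank k
          ↥(Subalgebra.toSubmodule (Algebra.adjoin k (Set.range (lambdaGen k))) ⊓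
              weightedHomogeneousSubmodule k lambdaWeight n) : ℚ) =
        PowerSeries.coeff (R := ℚ) n (∏ d ∈ Finset.Icc 1 n, ((1 - PowerSeries.X ^ d)⁻¹) ^ d) := by
  refine ⟨Stmt16Aux.algInd, fun ab => Stmt16Aux.gen_hom ab, Stmt16Aux.count_gens, fun n => ?_⟩
  rw [Stmt16Aux.finrank_eq, Stmt16Aux.coeff_prod_eq]
end

section
/- In the ring of formal power series over ℚ, the identity Σ_{k ≥ 0} f(a,b,k) t^k = (1 − t^{a+b})^{−a} · Π_{1 ≤ k ≤ a+b−1} (1 − t^k)^{−k} holds, where f(a,b,k) is the number of multisets of pairs (c,d) ∈ ℕ⁺ × ℕ with each (c,d) ≤ (a,b) in the order φ (listing pairs by increasing c+d, breaking ties so that (a,b) is the a-th pair of weight a+b) and total weight Σ(c+d) = k. -/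
/-- The position of the pair `(c, d)` (with `c ≥ 1`) in the enumeration
`φ = ((1,0),(1,1),(2,0),(1,2),(2,1),(3,0),...)` of `ℕ⁺ × ℕ`, listing pairs by
increasing weight `c + d` and, within weight `w`, in the order
`(1,w-1),(2,w-2),...,(w,0)`. -/
def phiIdx (p : ℕ × ℕ) : ℕ := (p.1 + p.2 - 1) * (p.1 + p.2) / 2 + p.1

open PowerSeries

set_option linter.unusedSectionVars false
variable {α : Type*} [DecidableEq α]

def msetSet (S : Finset α) (wt : α → ℕ) (K : ℕ) : Set (Multiset α) :=
  {s | (∀ x ∈ s, x ∈ S) ∧ (s.map wt).sum = K}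

lemma card_le_wsum (wt : α → ℕ) (s : Multiset α) (h : ∀ x ∈ s, 1 ≤ wt x) :
    Multiset.card s ≤ (s.map wt).sum := by
  induction s using Multiset.induction with
  | empty => simp
  | cons a s ih =>
    simp only [Multiset.card_cons, Multiset.map_cons, Multiset.sum_cons]
    have h1 := h a (Multiset.mem_cons_self a s)
    have h2 := ih (fun x hx => h x (Multiset.mem_cons_of_mem hx))
    omega

lemma msetSet_finite (S : Finset α) (wt : α → ℕ) (hwt : ∀ i ∈ S, 1 ≤ wt i) (K : ℕ) :
    (msetSet S wt K).Finite := by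
  apply Set.Finite.subset (Set.finite_mem_finset ((K • S.val).powerset.toFinset))
  intro s hs
  obtain ⟨h1, h2⟩ := hs
  simp only [Set.mem_setOf_eq, Multiset.mem_toFinset, Multiset.mem_powerset]
  rw [Multiset.le_iff_count]
  intro x
  rw [Multiset.count_nsmul]
  by_cases hx : x ∈ s
  · have hxS : x ∈ S := h1 x hx
    have : S.val.count x = 1 := by
      rw [Multiset.count_eq_one_of_mem S.nodup hxS]
    rw [this, mul_one]
    calc s.count x ≤ Multiset.card s := Multiset.count_le_card x s
      _ ≤ (s.map wt).sum := card_le_wsum wt s (fun y hy => hwt y (h1 y hy))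
      _ = K := h2
  · simp [Multiset.count_eq_zero_of_notMem hx]

lemma msetSet_empty (wt : α → ℕ) (K : ℕ) :
    msetSet (∅ : Finset α) wt K = if K = 0 then {0} else ∅ := by
  ext s
  simp only [msetSet, Set.mem_setOf_eq]
  split_ifs with hK
  · subst hK
    constructor
    · rintro ⟨h1, h2⟩
      have : s = 0 := Multiset.eq_zero_of_forall_notMem (fun x hx => by simpa using h1 x hx)
      simpa using this
    · rintro rfl
      simp
  · constructor
    · rintro ⟨h1, h2⟩
      have : s = 0 := Multiset.eq_zero_of_forall_notMem (fun x hx => by simpa using h1 x hx)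
      subst this
      simp at h2
      exact absurd h2.symm hK
    · intro h; simp at h

lemma msetSet_rec (S : Finset α) (wt : α → ℕ) (i : α) (hi : i ∉ S)
    (hwt : ∀ j ∈ insert i S, 1 ≤ wt j) (K : ℕ) :
    (msetSet (insert i S) wt K).ncard =
      (msetSet S wt K).ncard +
        (if wt i ≤ K then (msetSet (insert i S) wt (K - wt i)).ncard else 0) := by
  set T : Set (Multiset α) := msetSet (insert i S) wt K with hT
  have hTfin : T.Finite := msetSet_finite _ wt hwt K
  set T0 : Set (Multiset α) := {s ∈ T | i ∉ s} with hT0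
  set T1 : Set (Multiset α) := {s ∈ T | i ∈ s} with hT1
  have hunion : T = T0 ∪ T1 := by
    ext s; by_cases h : i ∈ s <;> simp [hT0, hT1, h]
  have hdisj : Disjoint T0 T1 := by
    rw [Set.disjoint_iff]
    rintro s ⟨⟨_, h0⟩, ⟨_, h1⟩⟩
    exact absurd h1 h0
  have hcard : T.ncard = T0.ncard + T1.ncard := by
    rw [hunion]
    exact Set.ncard_union_eq hdisj (hTfin.subset (by rw [hunion]; exact Set.subset_union_left))
      (hTfin.subset (by rw [hunion]; exact Set.subset_union_right))
  have hT0eq : T0 = msetSet S wt K := by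
    ext s
    simp only [hT0, hT, msetSet, Set.mem_setOf_eq, Set.mem_sep_iff]
    constructor
    · rintro ⟨⟨h1, h2⟩, h3⟩
      refine ⟨fun x hx => ?_, h2⟩
      rcases Finset.mem_insert.mp (h1 x hx) with rfl | hxS
      · exact absurd hx h3
      · exact hxS
    · rintro ⟨h1, h2⟩
      exact ⟨⟨fun x hx => Finset.mem_insert_of_mem (h1 x hx), h2⟩,
        fun his => hi (h1 i his)⟩
  have hT1eq : T1.ncard = if wt i ≤ K then (msetSet (insert i S) wt (K - wt i)).ncard else 0 := by
    split_ifs with hle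
    · have himg : (fun s : Multiset α => i ::ₘ s) '' msetSet (insert i S) wt (K - wt i) = T1 := by
        ext s
        simp only [Set.mem_image, hT1, hT, msetSet, Set.mem_setOf_eq, Set.mem_sep_iff]
        constructor
        · rintro ⟨t, ⟨h1, h2⟩, rfl⟩
          refine ⟨⟨fun x hx => ?_, ?_⟩, Multiset.mem_cons_self i t⟩
          · rcases Multiset.mem_cons.mp hx with rfl | hxt
            · exact Finset.mem_insert_self _ S
            · exact h1 x hxt
          · rw [Multiset.map_cons, Multiset.sum_cons, h2]; omega
        · rintro ⟨⟨h1, h2⟩, h3⟩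
          refine ⟨s.erase i, ⟨fun x hx => h1 x (Multiset.mem_of_mem_erase hx), ?_⟩,
            Multiset.cons_erase h3⟩
          have hs : s = i ::ₘ s.erase i := (Multiset.cons_erase h3).symm
          rw [hs, Multiset.map_cons, Multiset.sum_cons] at h2
          omega
      rw [← himg, Set.ncard_image_of_injective _ (fun s t h => (Multiset.cons_inj_right i).mp h)]
    · have : T1 = ∅ := by
        ext s
        simp only [hT1, hT, msetSet, Set.mem_sep_iff, Set.mem_setOf_eq, Set.mem_empty_iff_false,
          iff_false, not_and]
        rintro ⟨h1, h2⟩ h3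
        have hs : s = i ::ₘ s.erase i := (Multiset.cons_erase h3).symm
        rw [hs, Multiset.map_cons, Multiset.sum_cons] at h2
        omega
      simp [this]
  rw [hcard, hT0eq, hT1eq]

lemma gen_lemma (S : Finset α) (wt : α → ℕ) (hwt : ∀ i ∈ S, 1 ≤ wt i) :
    (PowerSeries.mk fun K => ((msetSet S wt K).ncard : ℚ)) =
      ∏ i ∈ S, (1 - PowerSeries.X ^ wt i)⁻¹ := by
  induction S using Finset.induction with
  | empty =>
    rw [Finset.prod_empty]
    ext n
    rw [coeff_mk, msetSet_empty]
    split_ifs with h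
    · subst h; simp
    · simp [coeff_one, h]
  | @insert i S hi ih =>
    have hwi : 1 ≤ wt i := hwt i (Finset.mem_insert_self i S)
    set F : ℚ⟦X⟧ := PowerSeries.mk fun K => ((msetSet (insert i S) wt K).ncard : ℚ) with hF
    set G : ℚ⟦X⟧ := PowerSeries.mk fun K => ((msetSet S wt K).ncard : ℚ) with hG
    have key : F = G + PowerSeries.X ^ wt i * F := by
      ext K
      rw [map_add, coeff_mk, coeff_X_pow_mul', coeff_mk]
      rw [msetSet_rec S wt i hi hwt K]
      push_cast
      split_ifs with h
      · rw [coeff_mk]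
      · simp
    have hunit : constantCoeff (R := ℚ) (1 - PowerSeries.X ^ wt i) ≠ 0 := by
      rw [map_sub, map_one, map_pow, constantCoeff_X, zero_pow (by omega), sub_zero]
      norm_num
    have hmul : (1 - PowerSeries.X ^ wt i) * F = G := by
      rw [sub_mul, one_mul]
      nth_rewrite 1 [key]
      ring
    rw [Finset.prod_insert hi]
    have ihG : G = ∏ j ∈ S, (1 - PowerSeries.X ^ wt j)⁻¹ :=
      ih (fun j hj => hwt j (Finset.mem_insert_of_mem hj))
    rw [← ihG, ← hmul, ← mul_assoc, PowerSeries.inv_mul_cancel _ hunit, one_mul]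


lemma tri_succ (w : ℕ) : w * (w + 1) / 2 = (w - 1) * w / 2 + w := by
  have h : w * (w + 1) = (w - 1) * w + 2 * w := by
    cases w with
    | zero => rfl
    | succ n => simp; ring
  rw [h, Nat.add_mul_div_left _ _ (by norm_num : (0:ℕ) < 2)]

lemma tri_mono {m n : ℕ} (h : m ≤ n) : (m - 1) * m / 2 ≤ (n - 1) * n / 2 :=
  Nat.div_le_div_right (Nat.mul_le_mul (by omega) h)

lemma phiIdx_cond (a b : ℕ) (ha : 1 ≤ a) (p : ℕ × ℕ) (hp : 1 ≤ p.1) :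
    phiIdx p ≤ phiIdx (a, b) ↔
      (p.1 + p.2 ≤ a + b ∧ (p.1 + p.2 = a + b → p.1 ≤ a)) := by
  obtain ⟨c, d⟩ := p
  simp only at hp ⊢
  simp only [phiIdx]
  constructor
  · intro h
    have hwN : c + d ≤ a + b := by
      by_contra hgt
      push_neg at hgt
      have h1 := tri_mono (show a + b + 1 ≤ c + d by omega)
      have e : a + b + 1 - 1 = a + b := by omega
      rw [e] at h1
      have h2 := tri_succ (a + b)
      omega
    refine ⟨hwN, fun hEq => ?_⟩
    rw [hEq] at h
    omega
  · rintro ⟨h1, h2⟩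
    rcases eq_or_lt_of_le h1 with heq | hlt
    · rw [heq]
      have := h2 heq
      omega
    · have t1 := tri_succ (c + d)
      have t2 := tri_mono (show c + d + 1 ≤ a + b by omega)
      have e : c + d + 1 - 1 = c + d := by omega
      rw [e] at t2
      omega

def rowA (a b w : ℕ) : Finset (ℕ × ℕ) :=
  (Finset.Icc 1 (if w = a + b then a else w)).image (fun c => (c, w - c))

def setA (a b : ℕ) : Finset (ℕ × ℕ) :=
  (Finset.Icc 1 (a + b)).biUnion (rowA a b)

lemma mem_rowA {a b w : ℕ} (ha : 1 ≤ a) (hw : w ≤ a + b) {p : ℕ × ℕ} :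
    p ∈ rowA a b w ↔ 1 ≤ p.1 ∧ p.1 + p.2 = w ∧ (w = a + b → p.1 ≤ a) := by
  obtain ⟨c, d⟩ := p
  simp only [rowA, Finset.mem_image, Finset.mem_Icc, Prod.mk.injEq]
  constructor
  · rintro ⟨c', ⟨h1, h2⟩, rfl, rfl⟩
    have hcw : c' ≤ w := by
      split_ifs at h2 with h
      · omega
      · exact h2
    refine ⟨h1, by omega, fun hwN => ?_⟩
    rw [hwN] at h2
    simpa using h2
  · rintro ⟨h1, h2, h3⟩
    refine ⟨c, ⟨h1, ?_⟩, rfl, by omega⟩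
    split_ifs with h
    · exact h3 h
    · omega

lemma mem_setA {a b : ℕ} (ha : 1 ≤ a) {p : ℕ × ℕ} :
    p ∈ setA a b ↔ 1 ≤ p.1 ∧ p.1 + p.2 ≤ a + b ∧ (p.1 + p.2 = a + b → p.1 ≤ a) := by
  simp only [setA, Finset.mem_biUnion, Finset.mem_Icc]
  constructor
  · rintro ⟨w, ⟨hw1, hw2⟩, hp⟩
    rw [mem_rowA ha hw2] at hp
    obtain ⟨h1, h2, h3⟩ := hp
    exact ⟨h1, by omega, by rw [h2]; exact h3⟩
  · rintro ⟨h1, h2, h3⟩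
    exact ⟨p.1 + p.2, ⟨by omega, h2⟩, (mem_rowA ha h2).mpr ⟨h1, rfl, h3⟩⟩

lemma prodA (a b : ℕ) (ha : 1 ≤ a) :
    (∏ p ∈ setA a b, (1 - (PowerSeries.X : ℚ⟦X⟧) ^ (p.1 + p.2))⁻¹) =
      ((1 - PowerSeries.X ^ (a + b))⁻¹) ^ a *
        ∏ d ∈ Finset.Icc 1 (a + b - 1), ((1 - PowerSeries.X ^ d)⁻¹) ^ d := by
  rw [setA, Finset.prod_biUnion]
  · have hrow : ∀ w ∈ Finset.Icc 1 (a + b),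
        (∏ p ∈ rowA a b w, (1 - (PowerSeries.X : ℚ⟦X⟧) ^ (p.1 + p.2))⁻¹) =
          ((1 - PowerSeries.X ^ w)⁻¹) ^ (if w = a + b then a else w) := by
      intro w hw
      rw [Finset.mem_Icc] at hw
      rw [rowA, Finset.prod_image (by rintro c1 _ c2 _ h; exact congrArg Prod.fst h)]
      have hcongr : ∀ c ∈ Finset.Icc 1 (if w = a + b then a else w),
          (1 - (PowerSeries.X : ℚ⟦X⟧) ^ ((c, w - c).1 + (c, w - c).2))⁻¹ =
            (1 - PowerSeries.X ^ w)⁻¹ := by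
        intro c hc
        rw [Finset.mem_Icc] at hc
        have hcw : c ≤ w := by split_ifs at hc <;> omega
        have hcd : (c, w - c).1 + (c, w - c).2 = w := by
          show c + (w - c) = w
          omega
        rw [hcd]
      rw [Finset.prod_congr rfl hcongr, Finset.prod_const, Nat.card_Icc, Nat.add_sub_cancel]
    rw [Finset.prod_congr rfl hrow]
    have hsplit : Finset.Icc 1 (a + b) = insert (a + b) (Finset.Icc 1 (a + b - 1)) := by
      ext w
      simp only [Finset.mem_Icc, Finset.mem_insert]
      omega
    rw [hsplit, Finset.prod_insert (by simp only [Finset.mem_Icc]; omega), if_pos rfl]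
    congr 1
    refine Finset.prod_congr rfl (fun w hw => ?_)
    rw [Finset.mem_Icc] at hw
    rw [if_neg (by omega)]
  · intro w1 hw1 w2 hw2 hne
    simp only [Finset.mem_coe, Finset.mem_Icc] at hw1 hw2
    refine Finset.disjoint_left.mpr (fun p hp1 hp2 => ?_)
    rw [mem_rowA ha hw1.2] at hp1
    rw [mem_rowA ha hw2.2] at hp2
    exact hne (by omega)

/-- `fcount19 a b K` is the number of multisets of pairs `(c,d) ∈ ℕ⁺ × ℕ` with
each `(c,d) ≤ (a,b)` in the order `φ` and total weight `Σ (c + d) = K`. -/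
noncomputable def fcount19 (a b : ℕ) (K : ℕ) : ℕ :=
  Set.ncard {s : Multiset (ℕ × ℕ) |
    (∀ p ∈ s, 1 ≤ p.1 ∧ phiIdx p ≤ phiIdx (a, b)) ∧
      (s.map fun p => p.1 + p.2).sum = K}

/-- in `ℚ[[t]]`, the identity
`Σ_{k ≥ 0} f(a,b,k) t^k = (1 - t^{a+b})^{-a} · Π_{1 ≤ k ≤ a+b-1} (1 - t^k)^{-k}`
holds. -/
theorem stmt19 (a b : ℕ) (ha : 1 ≤ a) :
    (PowerSeries.mk fun K => (fcount19 a b K : ℚ)) =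
      ((1 - PowerSeries.X ^ (a + b))⁻¹) ^ a *
        ∏ d ∈ Finset.Icc 1 (a + b - 1), ((1 - PowerSeries.X ^ d)⁻¹) ^ d := by
  have hwt : ∀ p ∈ setA a b, 1 ≤ p.1 + p.2 := fun p hp => by
    have := ((mem_setA ha).mp hp).1; omega
  have hset : ∀ K, {s : Multiset (ℕ × ℕ) |
      (∀ p ∈ s, 1 ≤ p.1 ∧ phiIdx p ≤ phiIdx (a, b)) ∧
        (s.map fun p => p.1 + p.2).sum = K} =
      msetSet (setA a b) (fun p => p.1 + p.2) K := by
    intro K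
    ext s
    simp only [msetSet, Set.mem_setOf_eq]
    constructor
    · rintro ⟨h1, h2⟩
      refine ⟨fun p hp => ?_, h2⟩
      obtain ⟨hp1, hp2⟩ := h1 p hp
      exact (mem_setA ha).mpr ⟨hp1, (phiIdx_cond a b ha p hp1).mp hp2⟩
    · rintro ⟨h1, h2⟩
      refine ⟨fun p hp => ?_, h2⟩
      obtain ⟨hp1, hcond⟩ := (mem_setA ha).mp (h1 p hp)
      exact ⟨hp1, (phiIdx_cond a b ha p hp1).mpr hcond⟩
  have hmk : (PowerSeries.mk fun K => (fcount19 a b K : ℚ)) =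
      PowerSeries.mk fun K => (((msetSet (setA a b) (fun p => p.1 + p.2) K).ncard : ℕ) : ℚ) := by
    simp only [fcount19, hset]
  rw [hmk, gen_lemma _ _ hwt, prodA a b ha]
end
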